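/- arXiv:2107.03972 — 2 statements merged into one kernel-verified Lean document; each statement's English description precedes it below -/
import Mathlib

section
/- If every connective in 𝒞 is monotonic, then FOCDS(𝒞) = FOCLS(𝒞), i.e., a sequent of first-order formulas over 𝒞 is valid in all constant-domain Kripke models if and only if it is valid in all classical models. -/
open Classical


/-- First-order formulas over a set `C` of propositional connectives
(each `c : C` has arity `ar c`).  Individual variables and, for each arity `n`,
the `n`-ary predicate symbols are indexed by `ℕ`. -/
inductive Formula (C : Type) (ar : C → ℕ) : Type
  | atom (n : ℕ) (p : ℕ) (v : Fin n → ℕ)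
  | conn (c : C) (args : Fin (ar c) → Formula C ar)
  | all (x : ℕ) (φ : Formula C ar)
  | ex  (x : ℕ) (φ : Formula C ar)

/-- A classical first-order model: a nonempty domain `D` (a set in an ambient
type `U`) together with an interpretation of every `n`-ary predicate symbol. -/
structure CModel where
  U : Type
  D : Set U
  D_ne : D.Nonempty
  I : (n : ℕ) → ℕ → (Fin n → U) → Bool

/-- Classical interpretation of a formula (value in `{0,1}`, coded by `Bool`),
where `tf c` is the truth function of the connective `c`. -/
noncomputable def cVal {C : Type} {ar : C → ℕ}
    (tf : (c : C) → (Fin (ar c) → Bool) → Bool) (M : CModel) :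
    Formula C ar → (ℕ → M.U) → Bool
  | .atom n p v, ρ => M.I n p (fun i => ρ (v i))
  | .conn c args, ρ => tf c (fun i => cVal tf M (args i) ρ)
  | .all x φ, ρ => decide (∀ a ∈ M.D, cVal tf M φ (Function.update ρ x a) = true)
  | .ex x φ, ρ => decide (∃ a ∈ M.D, cVal tf M φ (Function.update ρ x a) = true)

/-- A first-order Kripke model: a nonempty preordered set of worlds `W`,
monotone nonempty domains `D w` (sets in an ambient type `U`), and hereditary
interpretations of the predicate symbols. -/
structure KModel where
  W : Type
  W_ne : Nonempty W
  R : W → W → Prop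
  refl : ∀ w, R w w
  trans : ∀ {w v u}, R w v → R v u → R w u
  U : Type
  D : W → Set U
  D_ne : ∀ w, (D w).Nonempty
  D_mono : ∀ {w v}, R w v → D w ⊆ D v
  I : W → (n : ℕ) → ℕ → (Fin n → U) → Bool
  hered : ∀ {w v}, R w v → ∀ n p (a : Fin n → U),
      (∀ i, a i ∈ D w) → I w n p a = true → I v n p a = true

/-- Kripke interpretation of a formula at a world (value in `{0,1}`). -/
noncomputable def kVal {C : Type} {ar : C → ℕ}
    (tf : (c : C) → (Fin (ar c) → Bool) → Bool) (K : KModel) :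
    Formula C ar → K.W → (ℕ → K.U) → Bool
  | .atom n p v, w, ρ => K.I w n p (fun i => ρ (v i))
  | .conn c args, w, ρ =>
      decide (∀ u, K.R w u → tf c (fun i => kVal tf K (args i) u ρ) = true)
  | .all x φ, w, ρ =>
      decide (∀ u, K.R w u → ∀ a ∈ K.D u,
        kVal tf K φ u (Function.update ρ x a) = true)
  | .ex x φ, w, ρ =>
      decide (∃ a ∈ K.D w, kVal tf K φ w (Function.update ρ x a) = true)

/-- A Kripke model has constant domains. -/
def ConstDom (K : KModel) : Prop := ∀ w v : K.W, K.D w = K.D v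

/-- The sequent `Γ ⟹ Δ` is valid in all classical models (`Γ ⟹ Δ ∈ FOCLS(𝒞)`):
at every classical model and assignment into the domain, its interpretation is 1,
i.e. it is never the case that everything in `Γ` gets 1 and everything in `Δ` gets 0. -/
def SeqCValid {C : Type} {ar : C → ℕ} (tf : (c : C) → (Fin (ar c) → Bool) → Bool)
    (Γ Δ : Set (Formula C ar)) : Prop :=
  ∀ M : CModel, ∀ ρ : ℕ → M.U, (∀ x, ρ x ∈ M.D) →
    ¬ ((∀ φ ∈ Γ, cVal tf M φ ρ = true) ∧ (∀ φ ∈ Δ, cVal tf M φ ρ = false))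

/-- The sequent `Γ ⟹ Δ` is valid in all constant-domain Kripke models
(`Γ ⟹ Δ ∈ FOCDS(𝒞)`). -/
def SeqCDValid {C : Type} {ar : C → ℕ} (tf : (c : C) → (Fin (ar c) → Bool) → Bool)
    (Γ Δ : Set (Formula C ar)) : Prop :=
  ∀ K : KModel, ConstDom K → ∀ w : K.W, ∀ ρ : ℕ → K.U, (∀ x, ρ x ∈ K.D w) →
    ¬ ((∀ φ ∈ Γ, kVal tf K φ w ρ = true) ∧ (∀ φ ∈ Δ, kVal tf K φ w ρ = false))

/-- A truth function is monotonic. -/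
def MonoTF {n : ℕ} (f : (Fin n → Bool) → Bool) : Prop :=
  ∀ a b : Fin n → Bool, (∀ i, a i ≤ b i) → f a ≤ f b

/-- Propositional formulas over `C`: built from propositional symbols
(indexed by `ℕ`) by the connectives in `C`. -/
inductive PFormula (C : Type) (ar : C → ℕ) : Type
  | atom (p : ℕ)
  | conn (c : C) (args : Fin (ar c) → PFormula C ar)

/-- Value of a propositional formula under a classical valuation `v`. -/
def pcVal {C : Type} {ar : C → ℕ} (tf : (c : C) → (Fin (ar c) → Bool) → Bool)
    (v : ℕ → Bool) : PFormula C ar → Bool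
  | .atom p => v p
  | .conn c args => tf c (fun i => pcVal tf v (args i))

/-- A propositional Kripke model. -/
structure PKModel where
  W : Type
  W_ne : Nonempty W
  R : W → W → Prop
  refl : ∀ w, R w w
  trans : ∀ {w v u}, R w v → R v u → R w u
  I : W → ℕ → Bool
  hered : ∀ {w v}, R w v → ∀ p, I w p = true → I v p = true

/-- Kripke interpretation of a propositional formula at a world. -/
noncomputable def pkVal {C : Type} {ar : C → ℕ}
    (tf : (c : C) → (Fin (ar c) → Bool) → Bool) (K : PKModel) :
    PFormula C ar → K.W → Bool
  | .atom p, w => K.I w p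
  | .conn c args, w =>
      decide (∀ u, K.R w u → tf c (fun i => pkVal tf K (args i) u) = true)

/-- The propositional sequent `Γ ⟹ Δ` is valid under all classical valuations
(`Γ ⟹ Δ ∈ CLS(𝒞)`). -/
def PSeqCValid {C : Type} {ar : C → ℕ} (tf : (c : C) → (Fin (ar c) → Bool) → Bool)
    (Γ Δ : Set (PFormula C ar)) : Prop :=
  ∀ v : ℕ → Bool,
    ¬ ((∀ φ ∈ Γ, pcVal tf v φ = true) ∧ (∀ φ ∈ Δ, pcVal tf v φ = false))

/-- The propositional sequent `Γ ⟹ Δ` is valid at all worlds of all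
propositional Kripke models (`Γ ⟹ Δ ∈ ILS(𝒞)`). -/
def PSeqKValid {C : Type} {ar : C → ℕ} (tf : (c : C) → (Fin (ar c) → Bool) → Bool)
    (Γ Δ : Set (PFormula C ar)) : Prop :=
  ∀ K : PKModel, ∀ w : K.W,
    ¬ ((∀ φ ∈ Γ, pkVal tf K φ w = true) ∧ (∀ φ ∈ Δ, pkVal tf K φ w = false))

/-- The formula `α` is classically valid (`α ∈ FOCL(𝒞)`). -/
def FmlCValid {C : Type} {ar : C → ℕ} (tf : (c : C) → (Fin (ar c) → Bool) → Bool)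
    (α : Formula C ar) : Prop :=
  ∀ M : CModel, ∀ ρ : ℕ → M.U, (∀ x, ρ x ∈ M.D) → cVal tf M α ρ = true

/-- The formula `α` is CD-valid (`α ∈ FOCD(𝒞)`): valid in all constant-domain
Kripke models. -/
def FmlCDValid {C : Type} {ar : C → ℕ} (tf : (c : C) → (Fin (ar c) → Bool) → Bool)
    (α : Formula C ar) : Prop :=
  ∀ K : KModel, ConstDom K → ∀ w : K.W, ∀ ρ : ℕ → K.U, (∀ x, ρ x ∈ K.D w) →
    kVal tf K α w ρ = true

/-- `α` is a propositional formula built only from propositional symbols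
(0-ary predicate symbols) and the connective `c`. -/
inductive IsPropC {C : Type} {ar : C → ℕ} (c : C) : Formula C ar → Prop
  | atom (p : ℕ) (v : Fin 0 → ℕ) : IsPropC c (.atom 0 p v)
  | conn (args : Fin (ar c) → Formula C ar) :
      (∀ i, IsPropC c (args i)) → IsPropC c (.conn c args)

/-- A propositional formula viewed as a first-order formula (propositional
symbols become 0-ary predicate symbols). -/
def PFormula.toFO {C : Type} {ar : C → ℕ} : PFormula C ar → Formula C ar
  | .atom p => .atom 0 p (fun i => i.elim0)
  | .conn c args => .conn c (fun i => (args i).toFO)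

/-- The classical model obtained from a Kripke model at a world. -/
def KModel.toC (K : KModel) (w : K.W) : CModel :=
  ⟨K.U, K.D w, K.D_ne w, fun n p a => K.I w n p a⟩

lemma update_mem_D (K : KModel) (w : K.W) (ρ : ℕ → K.U) (hρ : ∀ x, ρ x ∈ K.D w)
    (x : ℕ) (a : K.U) (ha : a ∈ K.D w) :
    ∀ y, Function.update ρ x a y ∈ K.D w := by
  intro y
  rcases eq_or_ne y x with h | h
  · subst h; simpa using ha
  · simpa [Function.update_apply, h] using hρ y

lemma kVal_hered {C : Type} {ar : C → ℕ}
    (tf : (c : C) → (Fin (ar c) → Bool) → Bool)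
    (K : KModel) (hcd : ConstDom K) :
    ∀ (φ : Formula C ar) (w v : K.W) (ρ : ℕ → K.U), (∀ x, ρ x ∈ K.D w) →
      K.R w v → kVal tf K φ w ρ = true → kVal tf K φ v ρ = true := by
  intro φ
  induction φ with
  | atom n p vars =>
    intro w v ρ hρ hwv h
    simpa [kVal] using K.hered hwv n p _ (fun i => hρ _) (by simpa [kVal] using h)
  | conn c args ih =>
    intro w v ρ hρ hwv h
    simp only [kVal, decide_eq_true_eq] at h ⊢
    intro u hvu; exact h u (K.trans hwv hvu)
  | all x φ ih =>
    intro w v ρ hρ hwv h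
    simp only [kVal, decide_eq_true_eq] at h ⊢
    intro u hvu a ha; exact h u (K.trans hwv hvu) a ha
  | ex x φ ih =>
    intro w v ρ hρ hwv h
    simp only [kVal, decide_eq_true_eq] at h ⊢
    obtain ⟨a, ha, hval⟩ := h
    exact ⟨a, (hcd w v) ▸ ha, ih w v _ (update_mem_D K w ρ hρ x a ha) hwv hval⟩

lemma kVal_eq_cVal {C : Type} {ar : C → ℕ}
    (tf : (c : C) → (Fin (ar c) → Bool) → Bool)
    (hmono : ∀ c : C, MonoTF (tf c)) (K : KModel) (hcd : ConstDom K) :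
    ∀ (φ : Formula C ar) (w : K.W) (ρ : ℕ → K.U), (∀ x, ρ x ∈ K.D w) →
      kVal tf K φ w ρ = cVal tf (K.toC w) φ ρ := by
  intro φ
  induction φ with
  | atom n p vars => intro w ρ hρ; rfl
  | conn c args ih =>
    intro w ρ hρ
    simp only [kVal, cVal]
    have hargs : (fun i => cVal tf (K.toC w) (args i) ρ)
        = fun i => kVal tf K (args i) w ρ :=
      funext fun i => (ih i w ρ hρ).symm
    rcases Bool.eq_false_or_eq_true (tf c fun i => cVal tf (K.toC w) (args i) ρ) with h | h
    case inr =>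
      rw [h]
      simp only [decide_eq_false_iff_not, not_forall]
      refine ⟨w, K.refl w, ?_⟩
      rw [hargs] at h
      simp [h]
    case inl =>
      rw [h]
      simp only [decide_eq_true_eq]
      intro u hwu
      have hle : ∀ i, kVal tf K (args i) w ρ ≤ kVal tf K (args i) u ρ := by
        intro i
        cases hv : kVal tf K (args i) w ρ with
        | false => exact Bool.false_le _
        | true => exact le_of_eq (kVal_hered tf K hcd (args i) w u ρ hρ hwu hv).symm
      have := hmono c _ _ hle
      rw [hargs] at h
      rw [h] at this
      exact le_antisymm (Bool.le_true _) this
  | all x φ ih =>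
    intro w ρ hρ
    simp only [kVal, cVal, decide_eq_decide]
    constructor
    · intro h a ha
      refine (ih w _ (update_mem_D K w ρ hρ x a ha)).symm.trans ?_
      exact h w (K.refl w) a ha
    · intro h u hwu a ha
      have ha' : a ∈ K.D w := (hcd u w) ▸ ha
      have := h a ha'
      replace this := (ih w _ (update_mem_D K w ρ hρ x a ha')).trans this
      exact kVal_hered tf K hcd φ w u _ (update_mem_D K w ρ hρ x a ha') hwu this
  | ex x φ ih =>
    intro w ρ hρ
    simp only [kVal, cVal, decide_eq_decide]
    constructor
    · rintro ⟨a, ha, hv⟩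
      exact ⟨a, ha, by refine (ih w _ (update_mem_D K w ρ hρ x a ha)).symm.trans ?_; exact hv⟩
    · rintro ⟨a, ha, hv⟩
      exact ⟨a, ha, by rw [ih w _ (update_mem_D K w ρ hρ x a ha)]; exact hv⟩

/-- if all connectives in `𝒞` are monotonic then
`FOCDS(𝒞) = FOCLS(𝒞)`. -/
theorem stmt_1 (C : Type) (ar : C → ℕ) (tf : (c : C) → (Fin (ar c) → Bool) → Bool)
    (hmono : ∀ c : C, MonoTF (tf c)) :
    ∀ Γ Δ : Set (Formula C ar), SeqCDValid tf Γ Δ ↔ SeqCValid tf Γ Δ := by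
  intro Γ Δ
  constructor
  · intro hCD M ρ hρ ⟨h1, h2⟩
    let K : KModel :=
      { W := Unit, W_ne := ⟨()⟩, R := fun _ _ => True, refl := fun _ => trivial,
        trans := fun _ _ => trivial, U := M.U, D := fun _ => M.D,
        D_ne := fun _ => M.D_ne, D_mono := fun _ => subset_rfl,
        I := fun _ => M.I, hered := fun _ _ _ _ _ h => h }
    have hcd : ConstDom K := fun _ _ => rfl
    have heq : ∀ φ : Formula C ar, kVal tf K φ () ρ = cVal tf M φ ρ := by
      intro φ
      exact kVal_eq_cVal tf hmono K hcd φ () ρ hρ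
    exact hCD K hcd () ρ hρ
      ⟨fun φ hφ => (heq φ).trans (h1 φ hφ), fun φ hφ => (heq φ).trans (h2 φ hφ)⟩
  · intro hC K hcd w ρ hρ ⟨h1, h2⟩
    exact hC (K.toC w) ρ hρ
      ⟨fun φ hφ => (kVal_eq_cVal tf hmono K hcd φ w ρ hρ).symm.trans (h1 φ hφ),
       fun φ hφ => (kVal_eq_cVal tf hmono K hcd φ w ρ hρ).symm.trans (h2 φ hφ)⟩
end

section
/- Let c ∈ 𝒞 be a connective with f_c(0,…,0) = f_c(1,…,1) = 0 and f_c(a⃗) = 1 for some a⃗ ∈ {0,1}^{ar(c)}, and let p be a propositional symbol. Then there exists a propositional formula φ over 𝒞 (built only from propositional symbols and c) such that the sequent φ ⟹ p is valid in all classical models but not valid in some constant-domain Kripke model; i.e., φ ⟹ p ∈ FOCLS(𝒞) \ FOCDS(𝒞). -/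
open Classical


/-- Combination of arguments according to the pattern `a`. -/
def Af {C : Type} {ar : C → ℕ} (c : C) (a : Fin (ar c) → Bool)
    (X Y : Formula C ar) : Formula C ar :=
  .conn c (fun i => if a i then X else Y)

/-- The binary truth function induced by `c` and a pattern `a`. -/
def gbf {C : Type} {ar : C → ℕ} (tf : (c : C) → (Fin (ar c) → Bool) → Bool)
    (c : C) (a : Fin (ar c) → Bool) (x y : Bool) : Bool :=
  tf c (fun i => if a i then x else y)

lemma cVal_Af {C : Type} {ar : C → ℕ} (tf : (c : C) → (Fin (ar c) → Bool) → Bool)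
    (M : CModel) (c : C) (a : Fin (ar c) → Bool) (X Y : Formula C ar) (ρ : ℕ → M.U) :
    cVal tf M (Af c a X Y) ρ = gbf tf c a (cVal tf M X ρ) (cVal tf M Y ρ) := by
  have h : ∀ i : Fin (ar c), cVal tf M (if a i then X else Y) ρ =
      if a i then cVal tf M X ρ else cVal tf M Y ρ :=
    fun i => apply_ite (fun z => cVal tf M z ρ) _ _ _
  simp only [Af, cVal, gbf, h]

lemma kVal_Af {C : Type} {ar : C → ℕ} (tf : (c : C) → (Fin (ar c) → Bool) → Bool)
    (K : KModel) (c : C) (a : Fin (ar c) → Bool) (X Y : Formula C ar)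
    (w : K.W) (ρ : ℕ → K.U) :
    kVal tf K (Af c a X Y) w ρ =
      decide (∀ u, K.R w u →
        gbf tf c a (kVal tf K X u ρ) (kVal tf K Y u ρ) = true) := by
  have h : ∀ (u : K.W) (i : Fin (ar c)), kVal tf K (if a i then X else Y) u ρ =
      if a i then kVal tf K X u ρ else kVal tf K Y u ρ :=
    fun u i => apply_ite (fun z => kVal tf K z u ρ) _ _ _
  simp only [Af, kVal, gbf, h]
  exact decide_eq_decide.mpr Iff.rfl

/-- The two-world Kripke countermodel: worlds `false ⪯ true`, trivial domain,
`p+1` true everywhere, `p` true only at the top world. -/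
def myK (p : ℕ) : KModel where
  W := Bool
  W_ne := ⟨false⟩
  R := fun x y => x = true → y = true
  refl := fun _ h => h
  trans := fun h1 h2 h => h2 (h1 h)
  U := Unit
  D := fun _ => Set.univ
  D_ne := fun _ => ⟨(), trivial⟩
  D_mono := fun _ _ h => h
  I := fun w n q _ => decide (q = p + 1) || (w && decide (q = p))
  hered := by
    intro w v hwv n q b _ hI
    simp only [Bool.or_eq_true, Bool.and_eq_true] at hI ⊢
    rcases hI with h | ⟨hw, hq⟩
    · exact Or.inl h
    · exact Or.inr ⟨hwv hw, hq⟩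

/-- if `f_c(0,…,0) = f_c(1,…,1) = 0` and `f_c(a⃗) = 1` for some
`a⃗`, then for any propositional symbol `p` there is a propositional formula `φ`
built only from propositional symbols and `c` with
`φ ⟹ p ∈ FOCLS(𝒞) \ FOCDS(𝒞)`. -/
theorem stmt_15 (C : Type) (ar : C → ℕ) (tf : (c : C) → (Fin (ar c) → Bool) → Bool)
    (c : C) (h0 : tf c (fun _ => false) = false) (h1 : tf c (fun _ => true) = false)
    (ha : ∃ a : Fin (ar c) → Bool, tf c a = true) (p : ℕ) :
    ∃ φ : Formula C ar, IsPropC c φ ∧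
      SeqCValid tf {φ} {Formula.atom 0 p (fun i => i.elim0)} ∧
      ¬ SeqCDValid tf {φ} {Formula.atom 0 p (fun i => i.elim0)} := by
  classical
  obtain ⟨a, hga⟩ := ha
  -- abbreviations
  set P : Formula C ar := Formula.atom 0 p (fun i => i.elim0) with hPdef
  set Rf : Formula C ar := Formula.atom 0 (p + 1) (fun i => i.elim0) with hRdef
  set bot : Formula C ar := Af c a P P with hbotdef
  set X1 : Formula C ar := Af c a Rf P with hX1def
  set al : Formula C ar := Af c a Rf X1 with haldef
  set φ : Formula C ar := Af c a al bot with hφdef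
  -- facts about the induced binary truth function
  have hgb00 : gbf tf c a false false = false := by
    have : (fun i : Fin (ar c) => if a i then false else false) =
        (fun _ : Fin (ar c) => false) := by funext i; split <;> rfl
    simpa only [gbf, this] using h0
  have hgb11 : gbf tf c a true true = false := by
    have : (fun i : Fin (ar c) => if a i then true else true) =
        (fun _ : Fin (ar c) => true) := by funext i; split <;> rfl
    simpa only [gbf, this] using h1
  have hgb10 : gbf tf c a true false = true := by
    have : (fun i : Fin (ar c) => if a i then true else false) = a := by
      funext i; cases h : a i <;> simp [h]
    simpa only [gbf, this] using hga
  have hgbxx : ∀ x : Bool, gbf tf c a x x = false := by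
    intro x; cases x
    · exact hgb00
    · exact hgb11
  refine ⟨φ, ?_, ?_, ?_⟩
  · -- IsPropC
    have hP : IsPropC c P := IsPropC.atom p _
    have hR : IsPropC c Rf := IsPropC.atom (p + 1) _
    have hAf : ∀ X Y : Formula C ar, IsPropC c X → IsPropC c Y →
        IsPropC c (Af c a X Y) := by
      intro X Y hX hY
      exact IsPropC.conn _ (fun i => by split <;> assumption)
    exact hAf _ _ (hAf _ _ hR (hAf _ _ hR hP)) (hAf _ _ hP hP)
  · -- classically valid
    intro M ρ hρ ⟨h1', h2'⟩
    have hφt : cVal tf M φ ρ = true := h1' φ rfl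
    have hpf : cVal tf M P ρ = false := h2' P rfl
    rw [hφdef, haldef, hX1def, hbotdef] at hφt
    rw [cVal_Af, cVal_Af, cVal_Af, cVal_Af, hpf, hgbxx] at hφt
    cases hx : cVal tf M Rf ρ <;> rw [hx] at hφt
    · rw [hgb00, hgb00, hgb00] at hφt; exact Bool.false_ne_true hφt
    · rw [hgb10, hgb11, hgb00] at hφt; exact Bool.false_ne_true hφt
  · -- not CD-valid
    intro h
    have hpne : ¬ (p = p + 1) := by omega
    -- atom values in myK
    have hPk : ∀ (w : Bool) (ρ : ℕ → Unit), kVal tf (myK p) P w ρ = w := by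
      intro w ρ
      show (myK p).I w 0 p _ = w
      simp [myK, hpne]
    have hRk : ∀ (w : Bool) (ρ : ℕ → Unit), kVal tf (myK p) Rf w ρ = true := by
      intro w ρ
      show (myK p).I w 0 (p + 1) _ = true
      simp [myK]
    have hbotk : ∀ (w : Bool) (ρ : ℕ → Unit), kVal tf (myK p) bot w ρ = false := by
      intro w ρ
      erw [hbotdef, kVal_Af, decide_eq_false_iff_not]
      intro hall
      have := hall w ((myK p).refl w)
      rw [hPk, hgbxx] at this
      exact Bool.false_ne_true this
    have hX1k : ∀ (w : Bool) (ρ : ℕ → Unit), kVal tf (myK p) X1 w ρ = false := by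
      intro w ρ
      erw [hX1def, kVal_Af, decide_eq_false_iff_not]
      intro hall
      have := hall true (fun _ => rfl)
      rw [hRk, hPk, hgb11] at this
      exact Bool.false_ne_true this
    have halk : ∀ (w : Bool) (ρ : ℕ → Unit), kVal tf (myK p) al w ρ = true := by
      intro w ρ
      erw [haldef, kVal_Af, decide_eq_true_eq]
      intro u hu
      erw [hRk, hX1k, hgb10]
    have hφk : ∀ (ρ : ℕ → Unit), kVal tf (myK p) φ false ρ = true := by
      intro ρ
      erw [hφdef, kVal_Af, decide_eq_true_eq]
      intro u hu
      erw [halk, hbotk, hgb10]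
    exact h (myK p) (fun _ _ => rfl) false (fun _ => ()) (fun _ => trivial)
      ⟨fun ψ hψ => by rw [Set.mem_singleton_iff] at hψ; subst hψ; exact hφk _,
       fun ψ hψ => by
        rw [Set.mem_singleton_iff] at hψ; subst hψ; exact hPk false _⟩
end
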